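/- Assume that for every a ∈ (0,1] there exists an N-node strategy ν_a with PA_N^η(ν_a) ≥ a and MSE_N^η(ν_a) = c_η^N(a), and that a best response exists in the N-node game at threshold η. Then sInf { Q_DC(MSE_N^η(ν), PA_N^η(ν)) : ν a best response at threshold η } = sInf { Q_DC(c_η^N(α), α) : α ∈ (0,1] and Q_AD(c_η^N(α), α) ≥ Q_AD(c_η^N(a), a) for all a ∈ (0,1] }. That is, the data collector's worst-case utility against best responses at threshold η equals the value computed by the algorithm from the curve α ↦ c_η^N(α) alone. -/

import Mathlib

open MeasureTheory ProbabilityTheory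

noncomputable section

def midN (N : ℕ) (p : ℝ × (Fin (N-1) → ℝ)) : ℝ :=
  (max p.1 (⨆ i, p.2 i) + min p.1 (⨅ i, p.2 i)) / 2

def accN (N : ℕ) (η Δ : ℝ) : Set (ℝ × (Fin (N-1) → ℝ)) :=
  {p | max p.1 (⨆ i, p.2 i) - min p.1 (⨅ i, p.2 i) ≤ η * Δ}

def PA_N (N : ℕ) (η Δ : ℝ) (μ : Measure ℝ) (ν : Measure (Fin (N-1) → ℝ)) : ℝ :=
  ((μ.prod ν) (accN N η Δ)).toReal

def MSE_N (N : ℕ) (η Δ : ℝ) (μ : Measure ℝ) (ν : Measure (Fin (N-1) → ℝ)) : ℝ :=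
  ∫ p, (midN N p) ^ 2 ∂((μ.prod ν)[|accN N η Δ])

def mid2 (p : ℝ × ℝ) : ℝ := (max p.1 p.2 + min p.1 p.2) / 2

def acc2 (η Δ : ℝ) : Set (ℝ × ℝ) := {p | max p.1 p.2 - min p.1 p.2 ≤ η * Δ}

def PA_2 (η Δ : ℝ) (μ κ : Measure ℝ) : ℝ := ((μ.prod κ) (acc2 η Δ)).toReal

def MSE_2 (η Δ : ℝ) (μ κ : Measure ℝ) : ℝ :=
  ∫ p, (mid2 p) ^ 2 ∂((μ.prod κ)[|acc2 η Δ])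

def cN (N : ℕ) (η Δ : ℝ) (μ : Measure ℝ) (α : ℝ) : ℝ :=
  sSup {r | ∃ ν : Measure (Fin (N-1) → ℝ), IsProbabilityMeasure ν ∧
    α ≤ PA_N N η Δ μ ν ∧ r = MSE_N N η Δ μ ν}

def c2 (η Δ : ℝ) (μ : Measure ℝ) (α : ℝ) : ℝ :=
  sSup {r | ∃ κ : Measure ℝ, IsProbabilityMeasure κ ∧
    α ≤ PA_2 η Δ μ κ ∧ r = MSE_2 η Δ μ κ}

lemma accN_measurable (N : ℕ) (η Δ : ℝ) : MeasurableSet (accN N η Δ) := by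
  have h1 : Measurable fun p : ℝ × (Fin (N-1) → ℝ) => max p.1 (⨆ i, p.2 i) :=
    measurable_fst.max (Measurable.iSup fun i => (measurable_pi_apply i).comp measurable_snd)
  have h2 : Measurable fun p : ℝ × (Fin (N-1) → ℝ) => min p.1 (⨅ i, p.2 i) :=
    measurable_fst.min (Measurable.iInf fun i => (measurable_pi_apply i).comp measurable_snd)
  exact measurableSet_le (h1.sub h2) measurable_const

lemma mse_bound {N : ℕ} {η Δ : ℝ} (hΔ : 0 < Δ) (hη : 2 ≤ η)
    (μ : Measure ℝ) [IsProbabilityMeasure μ] (hμ : μ (Set.Icc (-Δ) Δ) = 1)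
    (ν : Measure (Fin (N-1) → ℝ)) [IsProbabilityMeasure ν] :
    MSE_N N η Δ μ ν ≤ ((1+η)*Δ)^2 := by
  set B := ((1+η)*Δ)^2 with hBdef
  have hB : 0 ≤ B := sq_nonneg _
  set ρ := (μ.prod ν)[|accN N η Δ] with hρdef
  by_cases hint : Integrable (fun p => (midN N p)^2) ρ
  · have h1 : ∀ᵐ p ∂(μ.prod ν), p.1 ∈ Set.Icc (-Δ) Δ := by
      rw [ae_iff]
      have hc : μ (Set.Icc (-Δ) Δ)ᶜ = 0 := by
        rw [measure_compl measurableSet_Icc (measure_ne_top μ _), hμ, measure_univ]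
        simp
      have hset : {p : ℝ × (Fin (N-1) → ℝ) | ¬ p.1 ∈ Set.Icc (-Δ) Δ}
          = Prod.fst ⁻¹' (Set.Icc (-Δ) Δ)ᶜ := rfl
      rw [hset, ← Measure.map_apply measurable_fst measurableSet_Icc.compl,
        Measure.map_fst_prod, measure_univ, one_smul, hc]
    have hae : ∀ᵐ p ∂ρ, (midN N p)^2 ≤ B := by
      rw [hρdef, ProbabilityTheory.cond]
      apply Measure.ae_smul_measure
      filter_upwards [ae_restrict_of_ae h1, ae_restrict_mem (accN_measurable N η Δ)]
        with p hp1 hp2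
      simp only [accN, Set.mem_setOf_eq] at hp2
      simp only [Set.mem_Icc] at hp1
      set m := max p.1 (⨆ i, p.2 i)
      set m' := min p.1 (⨅ i, p.2 i)
      have h4 : p.1 ≤ m := le_max_left _ _
      have h5 : m' ≤ p.1 := min_le_left _ _
      show ((m + m')/2)^2 ≤ ((1+η)*Δ)^2
      nlinarith [sq_nonneg ((2+η)*Δ - (m+m')), sq_nonneg ((2+η)*Δ + (m+m')),
        mul_pos hΔ hΔ, sq_nonneg (m+m'), sq_nonneg Δ]
    have hρle : (ρ Set.univ).toReal ≤ 1 := by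
      rw [hρdef, ProbabilityTheory.cond_apply (accN_measurable N η Δ), Set.inter_univ]
      calc (((μ.prod ν) (accN N η Δ))⁻¹ * (μ.prod ν) (accN N η Δ)).toReal
          ≤ (1 : ENNReal).toReal := ENNReal.toReal_mono (by simp) (ENNReal.inv_mul_le_one _)
        _ = 1 := by simp
    show (∫ p, (midN N p)^2 ∂ρ) ≤ B
    calc (∫ p, (midN N p)^2 ∂ρ) ≤ ∫ _, B ∂ρ := integral_mono_ae hint (integrable_const B) hae
      _ = (ρ Set.univ).toReal * B := by rw [integral_const]; simp [smul_eq_mul]; exact Or.inl rfl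
      _ ≤ 1 * B := by
          apply mul_le_mul_of_nonneg_right hρle hB
      _ = B := one_mul B
  · show (∫ p, (midN N p)^2 ∂ρ) ≤ B
    rw [integral_undef hint]; exact hB

lemma PA_le_one {N : ℕ} {η Δ : ℝ} (μ : Measure ℝ) [IsProbabilityMeasure μ]
    (ν : Measure (Fin (N-1) → ℝ)) [IsProbabilityMeasure ν] :
    PA_N N η Δ μ ν ≤ 1 := by
  unfold PA_N
  calc ((μ.prod ν) (accN N η Δ)).toReal ≤ (1 : ENNReal).toReal :=
        ENNReal.toReal_mono (by simp) prob_le_one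
    _ = 1 := by simp

lemma mse_le_cN {N : ℕ} {η Δ : ℝ} (hΔ : 0 < Δ) (hη : 2 ≤ η)
    (μ : Measure ℝ) [IsProbabilityMeasure μ] (hμ : μ (Set.Icc (-Δ) Δ) = 1)
    (ν : Measure (Fin (N-1) → ℝ)) [IsProbabilityMeasure ν] :
    MSE_N N η Δ μ ν ≤ cN N η Δ μ (PA_N N η Δ μ ν) := by
  apply le_csSup
  · refine ⟨((1+η)*Δ)^2, ?_⟩
    rintro r ⟨ν', hp', -, rfl⟩
    exact mse_bound hΔ hη μ hμ ν'
  · exact ⟨ν, inferInstance, le_rfl, rfl⟩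

def IsBestResponseN (N : ℕ) (η Δ : ℝ) (μ : Measure ℝ) (QAD : ℝ → ℝ → ℝ)
    (ν : Measure (Fin (N-1) → ℝ)) : Prop :=
  IsProbabilityMeasure ν ∧ 0 < PA_N N η Δ μ ν ∧
    ∀ ν' : Measure (Fin (N-1) → ℝ), IsProbabilityMeasure ν' → 0 < PA_N N η Δ μ ν' →
      QAD (MSE_N N η Δ μ ν') (PA_N N η Δ μ ν') ≤ QAD (MSE_N N η Δ μ ν) (PA_N N η Δ μ ν)

def IsBestResponse2 (η Δ : ℝ) (μ : Measure ℝ) (QAD : ℝ → ℝ → ℝ) (κ : Measure ℝ) : Prop :=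
  IsProbabilityMeasure κ ∧ 0 < PA_2 η Δ μ κ ∧
    ∀ κ' : Measure ℝ, IsProbabilityMeasure κ' → 0 < PA_2 η Δ μ κ' →
      QAD (MSE_2 η Δ μ κ') (PA_2 η Δ μ κ') ≤ QAD (MSE_2 η Δ μ κ) (PA_2 η Δ μ κ)

theorem stmt16 {N : ℕ} (hN : 2 ≤ N) {η Δ : ℝ} (hΔ : 0 < Δ) (hη : 2 ≤ η)
    (μ : Measure ℝ) [IsProbabilityMeasure μ] (hμ : μ (Set.Icc (-Δ) Δ) = 1)
    (QAD : ℝ → ℝ → ℝ)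
    (hQ1 : ∀ y : ℝ, StrictMono fun x => QAD x y) (hQ2 : ∀ x : ℝ, StrictMono (QAD x))
    (QDC : ℝ → ℝ → ℝ)
    (hD1 : ∀ y : ℝ, Antitone fun x => QDC x y) (hD2 : ∀ x : ℝ, Monotone (QDC x))
    (hatt : ∀ a : ℝ, 0 < a → a ≤ 1 → ∃ ν : Measure (Fin (N-1) → ℝ),
      IsProbabilityMeasure ν ∧ a ≤ PA_N N η Δ μ ν ∧ MSE_N N η Δ μ ν = cN N η Δ μ a)
    (hex : ∃ ν : Measure (Fin (N-1) → ℝ), IsBestResponseN N η Δ μ QAD ν) :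
    sInf {u : ℝ | ∃ ν : Measure (Fin (N-1) → ℝ), IsBestResponseN N η Δ μ QAD ν ∧
        u = QDC (MSE_N N η Δ μ ν) (PA_N N η Δ μ ν)} =
      sInf {u : ℝ | ∃ α : ℝ, 0 < α ∧ α ≤ 1 ∧
        (∀ a : ℝ, 0 < a → a ≤ 1 → QAD (cN N η Δ μ a) a ≤ QAD (cN N η Δ μ α) α) ∧
        u = QDC (cN N η Δ μ α) α} := by
  obtain ⟨ν₀, h₀⟩ := hex
  set c : ℝ → ℝ := cN N η Δ μ with hc
  set V : ℝ := QAD (MSE_N N η Δ μ ν₀) (PA_N N η Δ μ ν₀) with hV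
  have hVmax : ∀ ν : Measure (Fin (N-1) → ℝ), IsProbabilityMeasure ν → 0 < PA_N N η Δ μ ν →
      QAD (MSE_N N η Δ μ ν) (PA_N N η Δ μ ν) ≤ V := h₀.2.2
  have hCle : ∀ a : ℝ, 0 < a → a ≤ 1 → QAD (c a) a ≤ V := by
    intro a ha ha1
    obtain ⟨ν, hp, hPA, hMSE⟩ := hatt a ha ha1
    have h1 : 0 < PA_N N η Δ μ ν := lt_of_lt_of_le ha hPA
    calc QAD (c a) a ≤ QAD (c a) (PA_N N η Δ μ ν) := (hQ2 _).monotone hPA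
      _ = QAD (MSE_N N η Δ μ ν) (PA_N N η Δ μ ν) := by rw [hMSE]
      _ ≤ V := hVmax ν hp h1
  have hBR : ∀ ν : Measure (Fin (N-1) → ℝ), IsBestResponseN N η Δ μ QAD ν →
      MSE_N N η Δ μ ν = c (PA_N N η Δ μ ν) ∧
        QAD (MSE_N N η Δ μ ν) (PA_N N η Δ μ ν) = V := by
    rintro ν ⟨hp, hpos, hmax⟩
    have hval : QAD (MSE_N N η Δ μ ν) (PA_N N η Δ μ ν) = V :=
      le_antisymm (hVmax ν hp hpos) (hmax ν₀ h₀.1 h₀.2.1)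
    have hle : MSE_N N η Δ μ ν ≤ c (PA_N N η Δ μ ν) := mse_le_cN hΔ hη μ hμ ν
    have hge : c (PA_N N η Δ μ ν) ≤ MSE_N N η Δ μ ν := by
      by_contra h
      push_neg at h
      have h2 : QAD (MSE_N N η Δ μ ν) (PA_N N η Δ μ ν)
          < QAD (c (PA_N N η Δ μ ν)) (PA_N N η Δ μ ν) := hQ1 _ h
      have h3 := hCle (PA_N N η Δ μ ν) hpos (PA_le_one μ ν)
      rw [hval] at h2
      exact absurd h3 (not_le.mpr h2)
    exact ⟨le_antisymm hle hge, hval⟩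
  have hseteq : {u : ℝ | ∃ ν : Measure (Fin (N-1) → ℝ), IsBestResponseN N η Δ μ QAD ν ∧
        u = QDC (MSE_N N η Δ μ ν) (PA_N N η Δ μ ν)} =
      {u : ℝ | ∃ α : ℝ, 0 < α ∧ α ≤ 1 ∧
        (∀ a : ℝ, 0 < a → a ≤ 1 → QAD (cN N η Δ μ a) a ≤ QAD (cN N η Δ μ α) α) ∧
        u = QDC (cN N η Δ μ α) α} := by
    ext u
    constructor
    · rintro ⟨ν, hbr, rfl⟩
      obtain ⟨hmse, hval⟩ := hBR ν hbr
      refine ⟨PA_N N η Δ μ ν, hbr.2.1, (by have := hbr.1; exact PA_le_one μ ν), ?_, ?_⟩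
      · intro a ha ha1
        calc QAD (cN N η Δ μ a) a ≤ V := hCle a ha ha1
          _ = QAD (MSE_N N η Δ μ ν) (PA_N N η Δ μ ν) := hval.symm
          _ = QAD (cN N η Δ μ (PA_N N η Δ μ ν)) (PA_N N η Δ μ ν) := by rw [hmse]
      · rw [← hc, ← hmse]
    · rintro ⟨α, hα0, hα1, hmaxα, rfl⟩
      have hVα : QAD (c α) α = V := by
        refine le_antisymm (hCle α hα0 hα1) ?_
        have h1 := hmaxα (PA_N N η Δ μ ν₀) h₀.2.1 ((by have := h₀.1; exact PA_le_one μ ν₀))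
        obtain ⟨hmse₀, hval₀⟩ := hBR ν₀ h₀
        rw [hmse₀] at hval₀
        rw [← hval₀]
        exact h1
      obtain ⟨ν, hp, hPA, hMSE⟩ := hatt α hα0 hα1
      have hpos : 0 < PA_N N η Δ μ ν := lt_of_lt_of_le hα0 hPA
      have hval_le : QAD (c α) (PA_N N η Δ μ ν) ≤ QAD (c α) α := by
        rw [hVα, ← hMSE]
        exact hVmax ν hp hpos
      have hPAα : PA_N N η Δ μ ν = α :=
        le_antisymm ((hQ2 (c α)).le_iff_le.mp hval_le) hPA
      have hbr : IsBestResponseN N η Δ μ QAD ν := by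
        refine ⟨hp, hpos, ?_⟩
        intro ν' hp' hpos'
        calc QAD (MSE_N N η Δ μ ν') (PA_N N η Δ μ ν') ≤ V := hVmax ν' hp' hpos'
          _ = QAD (c α) α := hVα.symm
          _ = QAD (MSE_N N η Δ μ ν) (PA_N N η Δ μ ν) := by rw [hMSE, hPAα]
      exact ⟨ν, hbr, by rw [hMSE, hPAα]⟩
  rw [hseteq]
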